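/- (Optimality of exponent 1/2 on the square) Let Q = (0,π)². For every ε > 0 small enough and every sufficiently large n₁ ∈ ℕ, the function p₁(x,y) = (2/√N) Σ_{m=0}^{N-1} cos(mx) cos(n₁y) with N = ⌈ε√n₁⌉ is L²(Q)-normalized up to a bounded factor, its Neumann frequencies √(m²+n₁²) all lie in an interval of length O(ε²), and ∫_{{0}×(0,π)} |p₁|² dy ≥ ε√n₁. -/
import Mathlib


open Real

lemma int_cos_int (k : ℤ) : ∫ x in (0:ℝ)..π, Real.cos (k*x) = if k = 0 then π else 0 := by
  rcases eq_or_ne k 0 with h | h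
  · simp [h]
  · have hk : (k:ℝ) ≠ 0 := Int.cast_ne_zero.mpr h
    rw [if_neg h]
    have := intervalIntegral.integral_comp_mul_left (a := (0:ℝ)) (b := π) (fun x => Real.cos x) hk
    rw [this]
    simp [mul_comm π (k:ℝ), Real.sin_int_mul_pi]

lemma cc (a b : ℕ) : ∫ x in (0:ℝ)..π, Real.cos (a*x) * Real.cos (b*x)
    = if a = b then (if a = 0 then π else π/2) else 0 := by
  have key : ∀ x : ℝ, Real.cos (a*x) * Real.cos (b*x)
      = (Real.cos ((((a:ℤ)-(b:ℤ) : ℤ) : ℝ)*x) + Real.cos ((((a:ℤ)+(b:ℤ) : ℤ) : ℝ)*x))/2 := by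
    intro x
    push_cast
    rw [sub_mul, add_mul, Real.cos_sub, Real.cos_add]
    ring
  simp_rw [key]
  have ic : ∀ c : ℝ, IntervalIntegrable (fun x => Real.cos (c*x)) MeasureTheory.volume 0 π :=
    fun c => (Real.continuous_cos.comp (continuous_const.mul continuous_id')).intervalIntegrable 0 π
  rw [intervalIntegral.integral_div, intervalIntegral.integral_add (ic _) (ic _),
    int_cos_int, int_cos_int]
  rcases eq_or_ne a b with h | h
  · subst h
    rcases eq_or_ne a 0 with h0 | h0 <;> simp [h0]
  · have h1 : (a:ℤ) - b ≠ 0 := by omega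
    have h2 : (a:ℤ) + b ≠ 0 := by omega
    simp [h1, h2, h]

lemma ccont (a b : ℕ) : Continuous (fun x : ℝ => Real.cos (a*x) * Real.cos (b*x)) := by
  fun_prop

lemma sum_sq_int (N : ℕ) :
    ∫ x in (0:ℝ)..π, (∑ m ∈ Finset.range N, Real.cos (m*x))^2 = (N+1)*π/2 - (if N = 0 then π/2 else 0) := by
  have key : ∀ x : ℝ, (∑ m ∈ Finset.range N, Real.cos (m*x))^2
      = ∑ m ∈ Finset.range N, ∑ m' ∈ Finset.range N, Real.cos (m*x) * Real.cos (m'*x) := by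
    intro x
    rw [sq, Finset.sum_mul_sum]
  simp_rw [key]
  rw [intervalIntegral.integral_finset_sum (fun m _ =>
    ((continuous_finset_sum _ (fun m' _ => ccont m m')).intervalIntegrable 0 π))]
  have : ∀ m ∈ Finset.range N, (∫ x in (0:ℝ)..π,
      ∑ m' ∈ Finset.range N, Real.cos (m*x) * Real.cos (m'*x))
      = π/2 + (if m = 0 then π/2 else 0) := by
    intro m hm
    rw [intervalIntegral.integral_finset_sum (fun m' _ => ((ccont m m').intervalIntegrable 0 π))]
    simp_rw [cc]
    rw [Finset.sum_ite_eq (Finset.range N) m (fun _ => if m = 0 then π else π/2), if_pos hm]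
    split <;> ring
  rw [Finset.sum_congr rfl this, Finset.sum_add_distrib, Finset.sum_const, Finset.sum_ite_eq'
    (Finset.range N) 0 (fun _ => π/2)]
  rcases eq_or_ne N 0 with h | h
  · simp [h]
  · rw [if_pos (Finset.mem_range.mpr (Nat.pos_of_ne_zero h)), if_neg h, Finset.card_range]
    push_cast
    ring

/-- optimality of the exponent 1/2 on the square: for every small enough
`ε > 0` and every large enough `n₁`, the cluster
`p₁(x,y) = (2/√N) Σ_{m<N} cos(mx)cos(n₁y)` with `N = ⌈ε√n₁⌉` is `L²((0,π)²)`-normalized up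
to a bounded factor, its Neumann frequencies `√(m²+n₁²)` lie within `ε²` of `n₁`, and
`∫_{{0}×(0,π)} |p₁|² ≥ ε√n₁`. -/
theorem stmt_14 :
    ∃ ε₀ : ℝ, 0 < ε₀ ∧ ∃ C : ℝ, 0 < C ∧
      ∀ ε : ℝ, 0 < ε → ε ≤ ε₀ → ∃ n₀ : ℕ, ∀ n₁ : ℕ, n₀ ≤ n₁ →
        ∀ (N : ℕ) (p₁ : ℝ → ℝ → ℝ),
          N = ⌈ε * Real.sqrt n₁⌉₊ →
          (∀ x y : ℝ, p₁ x y =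
            (2 / Real.sqrt N) * ∑ m ∈ Finset.range N, Real.cos (m * x) * Real.cos (n₁ * y)) →
          (1 / C ≤ (∫ x in (0:ℝ)..π, ∫ y in (0:ℝ)..π, (p₁ x y)^2) ∧
            (∫ x in (0:ℝ)..π, ∫ y in (0:ℝ)..π, (p₁ x y)^2) ≤ C) ∧
          (∀ m : ℕ, m < N →
            Real.sqrt ((m : ℝ)^2 + (n₁ : ℝ)^2) - n₁ ≤ ε^2) ∧
          ε * Real.sqrt n₁ ≤ ∫ y in (0:ℝ)..π, (p₁ 0 y)^2 := by
  refine ⟨1, one_pos, 2*π^2, by positivity, fun ε hε hε1 => ⟨1, fun n₁ hn₁ N p₁ hN hp => ?_⟩⟩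
  have hπ : (3:ℝ) < π := Real.pi_gt_three
  have hn₁' : (1:ℝ) ≤ (n₁:ℝ) := by exact_mod_cast hn₁
  have hsq : Real.sqrt n₁ ^ 2 = (n₁:ℝ) := Real.sq_sqrt (by positivity)
  have hsqpos : 0 < Real.sqrt n₁ := Real.sqrt_pos.mpr (by linarith)
  have hεs : 0 < ε * Real.sqrt n₁ := by positivity
  have hN1 : 1 ≤ N := by
    rw [hN]
    exact Nat.ceil_pos.mpr hεs
  have hNpos : (0:ℝ) < N := by exact_mod_cast hN1
  have hNsq : Real.sqrt N ^ 2 = (N:ℝ) := Real.sq_sqrt (le_of_lt hNpos)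
  have hn₁0 : n₁ ≠ 0 := by omega
  -- key rewriting of p₁
  set S : ℝ → ℝ := fun x => ∑ m ∈ Finset.range N, Real.cos (m*x) with hS
  have key : ∀ x y : ℝ, p₁ x y = ((2 / Real.sqrt N) * S x) * Real.cos (n₁*y) := by
    intro x y
    rw [hp, ← Finset.sum_mul]
    ring
  -- inner integral in y
  have inner : ∀ c : ℝ, (∫ y in (0:ℝ)..π, (c * Real.cos (n₁*y))^2) = c^2 * (π/2) := by
    intro c
    have h1 : ∀ y : ℝ, (c * Real.cos (n₁*y))^2 = c^2 * (Real.cos (n₁*y) * Real.cos (n₁*y)) :=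
      fun y => by ring
    simp_rw [h1]
    rw [intervalIntegral.integral_const_mul, cc n₁ n₁, if_pos rfl, if_neg hn₁0]
  -- boundary integral
  have hS0 : S 0 = N := by
    simp [hS]
  have bdry : (∫ y in (0:ℝ)..π, (p₁ 0 y)^2) = 2*π*N := by
    simp_rw [key 0, inner, hS0]
    field_simp
    nlinarith [hNsq, hNpos]
  -- double integral
  have dbl : (∫ x in (0:ℝ)..π, ∫ y in (0:ℝ)..π, (p₁ x y)^2) = π^2 * (N+1)/N := by
    have h2 : ∀ x : ℝ, (∫ y in (0:ℝ)..π, (p₁ x y)^2) = (2*π/N) * (S x)^2 := by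
      intro x
      simp_rw [key x]
      rw [inner]
      have h3 : (2/Real.sqrt N * S x)^2 = 4/N * (S x)^2 := by
        rw [mul_pow, div_pow, hNsq]; norm_num
      rw [h3]
      ring
    simp_rw [h2]
    rw [intervalIntegral.integral_const_mul, hS]
    rw [sum_sq_int N, if_neg (by omega : N ≠ 0)]
    field_simp
    ring
  refine ⟨?_, ?_, ?_⟩
  · constructor
    · rw [dbl]
      have hπ2 : (9:ℝ) ≤ π^2 := by nlinarith
      rw [div_le_div_iff₀ (by positivity) hNpos]
      have e3 : π^2*((N:ℝ)+1)*(2*9) ≤ π^2*((N:ℝ)+1)*(2*π^2) :=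
        mul_le_mul_of_nonneg_left (by linarith) (by positivity)
      nlinarith [e3, hπ2, hNpos, mul_le_mul_of_nonneg_right hπ2 hNpos.le]
    · rw [dbl, div_le_iff₀ hNpos]
      have hN1' : (1:ℝ) ≤ N := by exact_mod_cast hN1
      nlinarith [hN1', sq_nonneg π]
  · intro m hm
    have hmle : (m:ℝ) ≤ ε * Real.sqrt n₁ := by
      have h1 : (N:ℝ) < ε * Real.sqrt n₁ + 1 := by
        rw [hN]; exact Nat.ceil_lt_add_one (le_of_lt hεs)
      have h2 : (m:ℝ) + 1 ≤ N := by exact_mod_cast Nat.succ_le_of_lt hm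
      linarith
    have hm2 : (m:ℝ)^2 ≤ ε^2 * n₁ := by
      nlinarith [hsq, Nat.cast_nonneg (α := ℝ) m]
    have : Real.sqrt ((m:ℝ)^2 + (n₁:ℝ)^2) ≤ (n₁:ℝ) + ε^2 := by
      rw [show (n₁:ℝ) + ε^2 = Real.sqrt (((n₁:ℝ) + ε^2)^2) from
        (Real.sqrt_sq (by positivity)).symm]
      apply Real.sqrt_le_sqrt
      nlinarith [sq_nonneg ε, hn₁']
    linarith
  · rw [bdry]
    have h1 : ε * Real.sqrt n₁ ≤ (N:ℝ) := by rw [hN]; exact Nat.le_ceil _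
    have h2 : (1:ℝ) * N ≤ (2*π) * N :=
      mul_le_mul_of_nonneg_right (by linarith) hNpos.le
    linarith
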